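/- For fixed B > 0, K₂ > 0 and integer N ≥ 1, the function θ ↦ (K₂/B²)·(1/sin²θ)·(1 + Σ_{i=1}^{N} 6i·cos(2iθ)) is strictly decreasing on (0, π/(4N+2)]. -/

import Mathlib

theorem A_ADR_strictAnti_in_theta (K₂ B : ℝ) (N : ℕ) (hK : 0 < K₂) (hB : 0 < B)
    (hN : 1 ≤ N) :
    StrictAntiOn (fun θ : ℝ =>
      (K₂ / B ^ 2) * (1 / Real.sin θ ^ 2) *
        (1 + ∑ i ∈ Finset.Icc 1 N, 6 * (i : ℝ) * Real.cos (2 * (i : ℝ) * θ)))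
      (Set.Ioc 0 (Real.pi / (4 * (N : ℝ) + 2))) := by
  intro x hx y hy hxy
  obtain ⟨hx0, hxle⟩ := hx
  obtain ⟨hy0, hyle⟩ := hy
  have hNpos : (1:ℝ) ≤ (N:ℝ) := by exact_mod_cast hN
  have hpi := Real.pi_pos
  have hbound : Real.pi / (4 * (N:ℝ) + 2) ≤ Real.pi / 6 := by
    apply div_le_div_of_nonneg_left hpi.le (by norm_num) (by linarith)
  have hy2 : y < Real.pi / 2 := lt_of_le_of_lt (hyle.trans hbound) (by linarith)
  have hx2 : x < Real.pi / 2 := hxy.trans hy2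
  -- sin facts
  have hsx : 0 < Real.sin x := Real.sin_pos_of_pos_of_lt_pi hx0 (by linarith)
  have hsy : 0 < Real.sin y := Real.sin_pos_of_pos_of_lt_pi hy0 (by linarith)
  have hsin : Real.sin x < Real.sin y :=
    Real.strictMonoOn_sin ⟨by linarith, hx2.le⟩ ⟨by linarith, hy2.le⟩ hxy
  -- bound on 2*i*θ for θ ≤ π/(4N+2)
  have key : ∀ θ : ℝ, 0 < θ → θ ≤ Real.pi / (4 * (N:ℝ) + 2) →
      ∀ i ∈ Finset.Icc 1 N, 0 < 2 * (i:ℝ) * θ ∧ 2 * (i:ℝ) * θ < Real.pi / 2 := by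
    intro θ hθ0 hθle i hi
    rw [Finset.mem_Icc] at hi
    have hi1 : (1:ℝ) ≤ (i:ℝ) := by exact_mod_cast hi.1
    have hiN : (i:ℝ) ≤ (N:ℝ) := by exact_mod_cast hi.2
    constructor
    · positivity
    · have h1 : 2 * (i:ℝ) * θ ≤ 2 * (N:ℝ) * θ := by nlinarith
      have h2 : 2 * (N:ℝ) * θ ≤ 2 * (N:ℝ) * (Real.pi / (4 * (N:ℝ) + 2)) := by nlinarith
      have h3 : 2 * (N:ℝ) * (Real.pi / (4 * (N:ℝ) + 2)) < Real.pi / 2 := by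
        rw [← mul_div_assoc, div_lt_div_iff₀ (by linarith) (by norm_num)]
        nlinarith
      linarith
  -- sum comparison
  have hsum : ∑ i ∈ Finset.Icc 1 N, 6 * (i:ℝ) * Real.cos (2 * (i:ℝ) * y) <
      ∑ i ∈ Finset.Icc 1 N, 6 * (i:ℝ) * Real.cos (2 * (i:ℝ) * x) := by
    apply Finset.sum_lt_sum_of_nonempty (Finset.nonempty_Icc.mpr hN)
    intro i hi
    obtain ⟨hxp, hxlt⟩ := key x hx0 hxle i hi
    obtain ⟨hyp, hylt⟩ := key y hy0 hyle i hi
    have hi1 : (1:ℝ) ≤ (i:ℝ) := by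
      rw [Finset.mem_Icc] at hi; exact_mod_cast hi.1
    have hcos : Real.cos (2 * (i:ℝ) * y) < Real.cos (2 * (i:ℝ) * x) := by
      apply Real.strictAntiOn_cos ⟨hxp.le, by linarith⟩ ⟨hyp.le, by linarith⟩
      nlinarith
    nlinarith
  -- positivity of sum at y
  have hSy : 0 < 1 + ∑ i ∈ Finset.Icc 1 N, 6 * (i:ℝ) * Real.cos (2 * (i:ℝ) * y) := by
    have : 0 ≤ ∑ i ∈ Finset.Icc 1 N, 6 * (i:ℝ) * Real.cos (2 * (i:ℝ) * y) := by
      apply Finset.sum_nonneg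
      intro i hi
      obtain ⟨hyp, hylt⟩ := key y hy0 hyle i hi
      have hc : 0 ≤ Real.cos (2 * (i:ℝ) * y) :=
        Real.cos_nonneg_of_mem_Icc ⟨by linarith, hylt.le⟩
      positivity
    linarith
  -- combine
  have hinv : 1 / Real.sin y ^ 2 < 1 / Real.sin x ^ 2 := by
    apply one_div_lt_one_div_of_lt (by positivity)
    nlinarith
  have hC : 0 < K₂ / B ^ 2 := by positivity
  have hSx : 1 + ∑ i ∈ Finset.Icc 1 N, 6 * (i:ℝ) * Real.cos (2 * (i:ℝ) * y) <
      1 + ∑ i ∈ Finset.Icc 1 N, 6 * (i:ℝ) * Real.cos (2 * (i:ℝ) * x) := by linarith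
  have hix : 0 < 1 / Real.sin x ^ 2 := by positivity
  have hmain := mul_lt_mul_of_pos_left (mul_lt_mul hinv hSx.le hSy hix.le) hC
  simpa [mul_assoc] using hmain
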